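/- Let 0 < r ≤ 1 and k ≥ 0, and let s ∈ S ∖ (T ∪ W₂) be a state with u_k(s) = r. Then for every move b ∈ Γ₂(s): either dest_k(s,b) ∩ U^k_{>r} ≠ ∅, or dest_k(s,b) ⊆ U^k_r and there exists a state t ∈ dest_k(s,b) with entry time ℓ_k(t) < ℓ_k(s). -/

import Mathlib

open scoped Classical

/-- A (two-player) concurrent game structure: a finite state space `S`, a finite
set `M` of moves, move assignments `Γ₁ Γ₂ : S → Finset M`, and a probabilistic
transition function `δ`. -/
structure CGame (S : Type) (M : Type) where
  Γ₁ : S → Finset M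
  Γ₂ : S → Finset M
  δ : S → M → M → S → ℝ

namespace CGame

variable {S M : Type} [Fintype S] [DecidableEq S] [Fintype M] [DecidableEq M]

/-- Well-formedness of a concurrent game structure: move sets are nonempty and
`δ s a b` is a probability distribution over states. -/
def IsGame (G : CGame S M) : Prop :=
  (∀ s, (G.Γ₁ s).Nonempty) ∧ (∀ s, (G.Γ₂ s).Nonempty) ∧
    (∀ s a b t, 0 ≤ G.δ s a b t) ∧ (∀ s a b, (∑ t, G.δ s a b t) = 1)

/-- `x : M → ℝ` is a probability distribution supported on `A`. -/
def IsDistOn (A : Finset M) (x : M → ℝ) : Prop :=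
  (∀ a, 0 ≤ x a) ∧ (∀ a, x a ≠ 0 → a ∈ A) ∧ (∑ a, x a) = 1

/-- A selector for player 1. -/
def IsSel1 (G : CGame S M) (ξ : S → M → ℝ) : Prop := ∀ s, IsDistOn (G.Γ₁ s) (ξ s)

/-- A selector for player 2. -/
def IsSel2 (G : CGame S M) (ξ : S → M → ℝ) : Prop := ∀ s, IsDistOn (G.Γ₂ s) (ξ s)

/-- A strategy for player 1: maps a history (past states `w` and current state `s`)
to a distribution over the moves available at `s`. -/
def IsStrat1 (G : CGame S M) (σ : List S → S → M → ℝ) : Prop :=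
  ∀ w s, IsDistOn (G.Γ₁ s) (σ w s)

/-- A strategy for player 2. -/
def IsStrat2 (G : CGame S M) (σ : List S → S → M → ℝ) : Prop :=
  ∀ w s, IsDistOn (G.Γ₂ s) (σ w s)

/-- The memoryless strategy induced by a selector. -/
def ml (ξ : S → M → ℝ) : List S → S → M → ℝ := fun _ s => ξ s

/-- The pure (Dirac) distribution on a move `b`. -/
def pureDist (b : M) : M → ℝ := fun b' => if b' = b then 1 else 0

/-- The player-1 selector choosing all available moves uniformly at random. -/
noncomputable def uniformSel (G : CGame S M) : S → M → ℝ :=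
  fun s a => if a ∈ G.Γ₁ s then (1 : ℝ) / (G.Γ₁ s).card else 0

/-- Probability of reaching `T` within `n` steps, starting from history `w`
and current state `s`, under strategies `σ₁, σ₂`. -/
noncomputable def reachW (G : CGame S M) (σ₁ σ₂ : List S → S → M → ℝ) (T : Set S) :
    ℕ → List S → S → ℝ
  | 0, _, s => if s ∈ T then 1 else 0
  | n + 1, w, s =>
      if s ∈ T then 1
      else ∑ a : M, ∑ b : M, ∑ t : S,
        σ₁ w s a * σ₂ w s b * G.δ s a b t * reachW G σ₁ σ₂ T n (w ++ [s]) t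

/-- Probability of staying in `F` for `n` steps, starting from history `w`
and current state `s`, under strategies `σ₁, σ₂`. -/
noncomputable def safeW (G : CGame S M) (σ₁ σ₂ : List S → S → M → ℝ) (F : Set S) :
    ℕ → List S → S → ℝ
  | 0, _, s => if s ∈ F then 1 else 0
  | n + 1, w, s =>
      if s ∈ F then
        ∑ a : M, ∑ b : M, ∑ t : S,
          σ₁ w s a * σ₂ w s b * G.δ s a b t * safeW G σ₁ σ₂ F n (w ++ [s]) t
      else 0

/-- `Pr_s^{σ₁,σ₂}(Reach T)`: probability of eventually reaching `T` from `s`. -/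
noncomputable def prReach (G : CGame S M) (σ₁ σ₂ : List S → S → M → ℝ) (T : Set S)
    (s : S) : ℝ :=
  ⨆ n : ℕ, reachW G σ₁ σ₂ T n [] s

/-- `Pr_s^{σ₁,σ₂}(Safe F)`: probability that the play stays in `F` forever. -/
noncomputable def prSafe (G : CGame S M) (σ₁ σ₂ : List S → S → M → ℝ) (F : Set S)
    (s : S) : ℝ :=
  ⨅ n : ℕ, safeW G σ₁ σ₂ F n [] s

/-- `⟨1⟩val^{σ₁}(Reach T)(s) = inf_{σ₂} Pr_s^{σ₁,σ₂}(Reach T)`. -/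
noncomputable def valReachUnder (G : CGame S M) (σ₁ : List S → S → M → ℝ) (T : Set S)
    (s : S) : ℝ :=
  ⨅ σ₂ : {σ // IsStrat2 G σ}, prReach G σ₁ σ₂.1 T s

/-- `⟨1⟩val(Reach T)(s) = sup_{σ₁} inf_{σ₂} Pr_s^{σ₁,σ₂}(Reach T)`. -/
noncomputable def valReach (G : CGame S M) (T : Set S) (s : S) : ℝ :=
  ⨆ σ₁ : {σ // IsStrat1 G σ}, valReachUnder G σ₁.1 T s

/-- `⟨1⟩val^{σ₁}(Safe F)(s) = inf_{σ₂} Pr_s^{σ₁,σ₂}(Safe F)`. -/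
noncomputable def valSafeUnder (G : CGame S M) (σ₁ : List S → S → M → ℝ) (F : Set S)
    (s : S) : ℝ :=
  ⨅ σ₂ : {σ // IsStrat2 G σ}, prSafe G σ₁ σ₂.1 F s

/-- `⟨1⟩val(Safe F)(s) = sup_{σ₁} inf_{σ₂} Pr_s^{σ₁,σ₂}(Safe F)`. -/
noncomputable def valSafe (G : CGame S M) (F : Set S) (s : S) : ℝ :=
  ⨆ σ₁ : {σ // IsStrat1 G σ}, valSafeUnder G σ₁.1 F s

/-- `W₂ = {s | ⟨1⟩val(Reach T)(s) = 0}`. -/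
noncomputable def W2 (G : CGame S M) (T : Set S) : Set S := {s | valReach G T s = 0}

/-- `W₁ = {s | ⟨1⟩val(Safe F)(s) = 1}`. -/
noncomputable def W1 (G : CGame S M) (F : Set S) : Set S := {s | valSafe G F s = 1}

/-- A state is absorbing if for all moves the successor is the state itself. -/
def Absorbing (G : CGame S M) (s : S) : Prop := ∀ a b, G.δ s a b s = 1

/-- A player-1 strategy is proper if against every player-2 strategy, from every
state the set `T ∪ W₂` is reached with probability 1. -/
noncomputable def Proper (G : CGame S M) (T : Set S) (σ₁ : List S → S → M → ℝ) : Prop :=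
  ∀ σ₂, IsStrat2 G σ₂ → ∀ s, prReach G σ₁ σ₂ (T ∪ W2 G T) s = 1

/-- `Pre_{ξ₁,ξ₂}(v)(s)`: one-step expectation of `v` at `s` when the players use the
one-state selectors `x, y`. -/
noncomputable def preSS (G : CGame S M) (v : S → ℝ) (s : S) (x y : M → ℝ) : ℝ :=
  ∑ a : M, ∑ b : M, ∑ t : S, v t * G.δ s a b t * x a * y b

/-- `Pre_{1:ξ₁}(v)(s) = inf_{ξ₂} Pre_{ξ₁,ξ₂}(v)(s)`. -/
noncomputable def pre1Sel (G : CGame S M) (v : S → ℝ) (s : S) (x : M → ℝ) : ℝ :=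
  ⨅ y : {y : M → ℝ // IsDistOn (G.Γ₂ s) y}, preSS G v s x y.1

/-- `Pre₁(v)(s) = sup_{ξ₁} inf_{ξ₂} Pre_{ξ₁,ξ₂}(v)(s)`. -/
noncomputable def pre1 (G : CGame S M) (v : S → ℝ) (s : S) : ℝ :=
  ⨆ x : {x : M → ℝ // IsDistOn (G.Γ₁ s) x}, pre1Sel G v s x.1

/-- The value-iteration sequence: `u 0 = [T]`, `u (k+1) = Pre₁ (u k)`. -/
noncomputable def valIter (G : CGame S M) (T : Set S) : ℕ → S → ℝ
  | 0 => fun s => if s ∈ T then 1 else 0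
  | n + 1 => fun s => pre1 G (valIter G T n) s

/-- The entry time `ℓ_k(s) = min {j ≤ k | u_j(s) = u_k(s)}`. -/
noncomputable def entryTime (G : CGame S M) (T : Set S) (k : ℕ) (s : S) : ℕ :=
  sInf {j : ℕ | valIter G T j s = valIter G T k s}

/-- `dest(s,b)` under a player-1 selector `η`: possible successors of `s` when
player 1 plays `η` and player 2 plays `b`. -/
def destSet (G : CGame S M) (η : S → M → ℝ) (s : S) (b : M) : Set S :=
  {t | ∃ a, η s a ≠ 0 ∧ G.δ s a b t ≠ 0}

/-- `OptSel(v,s)`: the set of optimal one-state player-1 selectors for `v` at `s`. -/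
noncomputable def OptSel (G : CGame S M) (v : S → ℝ) (s : S) : Set (M → ℝ) :=
  {x | IsDistOn (G.Γ₁ s) x ∧ pre1Sel G v s x = pre1 G v s}

/-- `CountOpt(v,s,x)`: the set of counter-optimal player-2 moves against `x`. -/
noncomputable def countOpt (G : CGame S M) (v : S → ℝ) (s : S) (x : M → ℝ) : Finset M :=
  (G.Γ₂ s).filter fun b => preSS G v s x (pureDist b) = pre1 G v s

/-- The support of a one-state selector, as a `Finset`. -/
noncomputable def fsupp (x : M → ℝ) : Finset M := Finset.univ.filter fun a => x a ≠ 0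

/-- `OptSelCount(v,s)`: pairs `(A,B)` such that some optimal selector has support `A`
and counter-optimal action set `B`. -/
noncomputable def optSelCount (G : CGame S M) (v : S → ℝ) (s : S) :
    Set (Finset M × Finset M) :=
  {p | ∃ x ∈ OptSel G v s, fsupp x = p.1 ∧ countOpt G v s x = p.2}

/-- A selector is `k`-uniform if every probability it assigns is of the form `i/j`
with `0 ≤ i ≤ j ≤ k`. -/
def KUniform (k : ℕ) (ξ : S → M → ℝ) : Prop :=
  ∀ s a, ∃ i j : ℕ, i ≤ j ∧ j ≤ k ∧ ξ s a = (i : ℝ) / (j : ℝ)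

end CGame

set_option linter.unusedSectionVars false

namespace CGame

variable {S M : Type} [Fintype S] [DecidableEq S] [Fintype M] [DecidableEq M]

/-- The uniform distribution on a nonempty finset is a distribution. -/
lemma uniform_isDistOn (A : Finset M) (hA : A.Nonempty) :
    IsDistOn A (fun a => if a ∈ A then (1 : ℝ) / A.card else 0) := by
  have hc : (0 : ℝ) < A.card := by
    exact_mod_cast Finset.card_pos.mpr hA
  refine ⟨fun a => ?_, fun a ha => ?_, ?_⟩
  · dsimp only
    split
    · positivity
    · exact le_rfl
  · dsimp only at ha
    by_contra h
    simp [h] at ha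
  · dsimp only
    rw [Finset.sum_ite_mem, Finset.univ_inter, Finset.sum_const, nsmul_eq_mul]
    field_simp

lemma pureDist_isDistOn {A : Finset M} {b : M} (hb : b ∈ A) :
    IsDistOn A (pureDist b) := by
  refine ⟨fun a => ?_, fun a ha => ?_, ?_⟩
  · unfold pureDist; split <;> norm_num
  · unfold pureDist at ha
    by_cases h : a = b
    · subst h; exact hb
    · simp [h] at ha
  · simp [pureDist]

variable {G : CGame S M}

lemma nonempty_dist1 (hG : G.IsGame) (s : S) :
    Nonempty {x : M → ℝ // IsDistOn (G.Γ₁ s) x} :=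
  ⟨⟨_, uniform_isDistOn (G.Γ₁ s) (hG.1 s)⟩⟩

lemma nonempty_dist2 (hG : G.IsGame) (s : S) :
    Nonempty {y : M → ℝ // IsDistOn (G.Γ₂ s) y} :=
  ⟨⟨_, uniform_isDistOn (G.Γ₂ s) (hG.2.1 s)⟩⟩

lemma preSS_eq (G : CGame S M) (v : S → ℝ) (s : S) (x y : M → ℝ) :
    preSS G v s x y = ∑ a : M, ∑ b : M, (x a * y b) * ∑ t : S, v t * G.δ s a b t := by
  unfold preSS
  refine Finset.sum_congr rfl fun a _ => Finset.sum_congr rfl fun b _ => ?_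
  rw [Finset.mul_sum]
  exact Finset.sum_congr rfl fun t _ => by ring

lemma sum_xy {A B : Finset M} {x y : M → ℝ} (hx : IsDistOn A x) (hy : IsDistOn B y) :
    ∑ a : M, ∑ b : M, x a * y b = 1 := by
  rw [← Finset.sum_mul_sum Finset.univ Finset.univ x y, hx.2.2, hy.2.2, one_mul]

lemma inner_nonneg (hG : G.IsGame) {v : S → ℝ} (hv0 : ∀ t, 0 ≤ v t) (s : S) (a b : M) :
    0 ≤ ∑ t : S, v t * G.δ s a b t :=
  Finset.sum_nonneg fun t _ => mul_nonneg (hv0 t) (hG.2.2.1 s a b t)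

lemma inner_le_one (hG : G.IsGame) {v : S → ℝ} (hv1 : ∀ t, v t ≤ 1) (s : S) (a b : M) :
    ∑ t : S, v t * G.δ s a b t ≤ 1 := by
  calc ∑ t : S, v t * G.δ s a b t ≤ ∑ t : S, G.δ s a b t :=
        Finset.sum_le_sum fun t _ => by
          nlinarith [hG.2.2.1 s a b t, hv1 t]
    _ = 1 := hG.2.2.2 s a b

lemma preSS_nonneg (hG : G.IsGame) {v : S → ℝ} (hv0 : ∀ t, 0 ≤ v t) (s : S)
    {x y : M → ℝ} (hx : ∀ a, 0 ≤ x a) (hy : ∀ b, 0 ≤ y b) :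
    0 ≤ preSS G v s x y := by
  rw [preSS_eq]
  exact Finset.sum_nonneg fun a _ => Finset.sum_nonneg fun b _ =>
    mul_nonneg (mul_nonneg (hx a) (hy b)) (inner_nonneg hG hv0 s a b)

lemma preSS_le_one (hG : G.IsGame) {v : S → ℝ} (hv1 : ∀ t, v t ≤ 1) (s : S)
    {x y : M → ℝ} (hx : IsDistOn (G.Γ₁ s) x) (hy : IsDistOn (G.Γ₂ s) y) :
    preSS G v s x y ≤ 1 := by
  rw [preSS_eq]
  calc ∑ a : M, ∑ b : M, (x a * y b) * ∑ t : S, v t * G.δ s a b t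
      ≤ ∑ a : M, ∑ b : M, x a * y b :=
        Finset.sum_le_sum fun a _ => Finset.sum_le_sum fun b _ => by
          have h1 := inner_le_one hG hv1 s a b
          have h2 := mul_nonneg (hx.1 a) (hy.1 b)
          nlinarith
    _ = 1 := sum_xy hx hy

lemma preSS_ge_self (hG : G.IsGame) {v : S → ℝ} (hv0 : ∀ t, 0 ≤ v t) {s : S}
    (habs : Absorbing G s) {x y : M → ℝ}
    (hx : IsDistOn (G.Γ₁ s) x) (hy : IsDistOn (G.Γ₂ s) y) :
    v s ≤ preSS G v s x y := by
  rw [preSS_eq]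
  have key : ∀ a b : M, v s ≤ ∑ t : S, v t * G.δ s a b t := by
    intro a b
    have := Finset.single_le_sum (f := fun t => v t * G.δ s a b t)
      (fun t _ => mul_nonneg (hv0 t) (hG.2.2.1 s a b t)) (Finset.mem_univ s)
    try dsimp only at this
    rw [habs a b, mul_one] at this
    exact this
  calc v s = ∑ a : M, ∑ b : M, (x a * y b) * v s := by
        simp only [← Finset.sum_mul, sum_xy hx hy, one_mul]
    _ ≤ ∑ a : M, ∑ b : M, (x a * y b) * ∑ t : S, v t * G.δ s a b t :=
        Finset.sum_le_sum fun a _ => Finset.sum_le_sum fun b _ =>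
          mul_le_mul_of_nonneg_left (key a b) (mul_nonneg (hx.1 a) (hy.1 b))

lemma preSS_mono (hG : G.IsGame) {v w : S → ℝ} (hvw : ∀ t, v t ≤ w t) (s : S)
    {x y : M → ℝ} (hx : ∀ a, 0 ≤ x a) (hy : ∀ b, 0 ≤ y b) :
    preSS G v s x y ≤ preSS G w s x y := by
  rw [preSS_eq, preSS_eq]
  refine Finset.sum_le_sum fun a _ => Finset.sum_le_sum fun b _ =>
    mul_le_mul_of_nonneg_left ?_ (mul_nonneg (hx a) (hy b))
  exact Finset.sum_le_sum fun t _ =>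
    mul_le_mul_of_nonneg_right (hvw t) (hG.2.2.1 s a b t)

lemma bddBelow_preSS (hG : G.IsGame) {v : S → ℝ} (hv0 : ∀ t, 0 ≤ v t) (s : S)
    {x : M → ℝ} (hx : ∀ a, 0 ≤ x a) :
    BddBelow (Set.range fun y : {y : M → ℝ // IsDistOn (G.Γ₂ s) y} => preSS G v s x y.1) := by
  refine ⟨0, ?_⟩
  rintro z ⟨y, rfl⟩
  exact preSS_nonneg hG hv0 s hx y.2.1

lemma pre1Sel_le_preSS (hG : G.IsGame) {v : S → ℝ} (hv0 : ∀ t, 0 ≤ v t) (s : S)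
    {x y : M → ℝ} (hx : ∀ a, 0 ≤ x a) (hy : IsDistOn (G.Γ₂ s) y) :
    pre1Sel G v s x ≤ preSS G v s x y :=
  ciInf_le (bddBelow_preSS hG hv0 s hx) ⟨y, hy⟩

lemma pre1Sel_nonneg (hG : G.IsGame) {v : S → ℝ} (hv0 : ∀ t, 0 ≤ v t) (s : S)
    {x : M → ℝ} (hx : ∀ a, 0 ≤ x a) : 0 ≤ pre1Sel G v s x :=
  Real.iInf_nonneg fun y => preSS_nonneg hG hv0 s hx y.2.1

lemma pre1Sel_le_one (hG : G.IsGame) {v : S → ℝ} (hv0 : ∀ t, 0 ≤ v t)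
    (hv1 : ∀ t, v t ≤ 1) (s : S) {x : M → ℝ} (hx : IsDistOn (G.Γ₁ s) x) :
    pre1Sel G v s x ≤ 1 :=
  le_trans
    (pre1Sel_le_preSS hG hv0 s hx.1 (uniform_isDistOn (G.Γ₂ s) (hG.2.1 s)))
    (preSS_le_one hG hv1 s hx (uniform_isDistOn (G.Γ₂ s) (hG.2.1 s)))

lemma pre1Sel_mono (hG : G.IsGame) {v w : S → ℝ} (hv0 : ∀ t, 0 ≤ v t)
    (hvw : ∀ t, v t ≤ w t) (s : S) {x : M → ℝ} (hx : ∀ a, 0 ≤ x a) :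
    pre1Sel G v s x ≤ pre1Sel G w s x := by
  haveI := nonempty_dist2 hG s
  refine le_ciInf fun y => ?_
  exact le_trans (ciInf_le (bddBelow_preSS hG hv0 s hx) y)
    (preSS_mono hG hvw s hx y.2.1)

lemma le_pre1 (hG : G.IsGame) {v : S → ℝ} (hv0 : ∀ t, 0 ≤ v t) (hv1 : ∀ t, v t ≤ 1)
    (s : S) {x : M → ℝ} (hx : IsDistOn (G.Γ₁ s) x) :
    pre1Sel G v s x ≤ pre1 G v s := by
  refine le_ciSup (f := fun x : {x : M → ℝ // IsDistOn (G.Γ₁ s) x} => pre1Sel G v s x.1)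
    ⟨1, ?_⟩ ⟨x, hx⟩
  rintro z ⟨x', rfl⟩
  exact pre1Sel_le_one hG hv0 hv1 s x'.2

lemma pre1_nonneg (hG : G.IsGame) {v : S → ℝ} (hv0 : ∀ t, 0 ≤ v t) (s : S) :
    0 ≤ pre1 G v s :=
  Real.iSup_nonneg fun x => pre1Sel_nonneg hG hv0 s x.2.1

lemma pre1_le_one (hG : G.IsGame) {v : S → ℝ} (hv0 : ∀ t, 0 ≤ v t)
    (hv1 : ∀ t, v t ≤ 1) (s : S) : pre1 G v s ≤ 1 :=
  Real.iSup_le (fun x => pre1Sel_le_one hG hv0 hv1 s x.2) zero_le_one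

lemma pre1_mono (hG : G.IsGame) {v w : S → ℝ} (hv0 : ∀ t, 0 ≤ v t)
    (hvw : ∀ t, v t ≤ w t) (hw1 : ∀ t, w t ≤ 1) (s : S) :
    pre1 G v s ≤ pre1 G w s := by
  have hw0 : ∀ t, 0 ≤ w t := fun t => le_trans (hv0 t) (hvw t)
  refine Real.iSup_le (fun x => ?_) (pre1_nonneg hG hw0 s)
  exact le_trans (pre1Sel_mono hG hv0 hvw s x.2.1) (le_pre1 hG hw0 hw1 s x.2)

lemma self_le_pre1 (hG : G.IsGame) {v : S → ℝ} (hv0 : ∀ t, 0 ≤ v t)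
    (hv1 : ∀ t, v t ≤ 1) {s : S} (habs : Absorbing G s) :
    v s ≤ pre1 G v s := by
  have hx := uniform_isDistOn (G.Γ₁ s) (hG.1 s)
  refine le_trans ?_ (le_pre1 hG hv0 hv1 s hx)
  haveI := nonempty_dist2 hG s
  exact le_ciInf fun y => preSS_ge_self hG hv0 habs hx y.2

lemma valIter_nonneg (hG : G.IsGame) (T : Set S) :
    ∀ n t, 0 ≤ valIter G T n t := by
  intro n
  induction n with
  | zero => intro t; simp only [valIter]; split <;> norm_num
  | succ n ih => intro t; exact pre1_nonneg hG ih t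

lemma valIter_le_one (hG : G.IsGame) (T : Set S) :
    ∀ n t, valIter G T n t ≤ 1 := by
  intro n
  induction n with
  | zero => intro t; simp only [valIter]; split <;> norm_num
  | succ n ih => intro t; exact pre1_le_one hG (valIter_nonneg hG T n) ih t

lemma valIter_target (hG : G.IsGame) (T : Set S)
    (habs : ∀ s ∈ T ∪ W2 G T, Absorbing G s) :
    ∀ n, ∀ s ∈ T, valIter G T n s = 1 := by
  intro n
  induction n with
  | zero => intro t ht; simp [valIter, ht]
  | succ n ih =>
      intro t ht
      refine le_antisymm (pre1_le_one hG (valIter_nonneg hG T n) (valIter_le_one hG T n) t) ?_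
      have := self_le_pre1 hG (valIter_nonneg hG T n) (valIter_le_one hG T n)
        (habs t (Or.inl ht))
      rw [ih t ht] at this
      exact this

lemma valIter_mono_succ (hG : G.IsGame) (T : Set S)
    (habs : ∀ s ∈ T ∪ W2 G T, Absorbing G s) :
    ∀ n t, valIter G T n t ≤ valIter G T (n + 1) t := by
  intro n
  induction n with
  | zero =>
      intro t
      by_cases ht : t ∈ T
      · rw [valIter_target hG T habs 0 t ht, valIter_target hG T habs 1 t ht]
      · calc valIter G T 0 t = 0 := by simp [valIter, ht]
          _ ≤ valIter G T 1 t := valIter_nonneg hG T 1 t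
  | succ n ih =>
      intro t
      exact pre1_mono hG (valIter_nonneg hG T n) ih (valIter_le_one hG T (n + 1)) t

lemma valIter_mono (hG : G.IsGame) (T : Set S)
    (habs : ∀ s ∈ T ∪ W2 G T, Absorbing G s) {i j : ℕ} (hij : i ≤ j) (t : S) :
    valIter G T i t ≤ valIter G T j t :=
  monotone_nat_of_le_succ (fun n => valIter_mono_succ hG T habs n t) hij

end CGame

/-- **Structure of successors under the value-iteration selector `η_k`.**
Let `0 < r ≤ 1`, `k ≥ 0`, and let `s ∉ T ∪ W₂` with `u_k(s) = r`. Then for every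
player-2 move `b ∈ Γ₂(s)`: either some possible successor under `η_k` and `b`
lies in a higher value class `U^k_{>r}`, or all possible successors lie in the
value class `U^k_r` and some successor has strictly smaller entry time. -/
theorem value_iteration_selector_successors
    {S M : Type} [Fintype S] [DecidableEq S] [Fintype M] [DecidableEq M]
    (G : CGame S M) (hG : G.IsGame) (T : Set S)
    (habs : ∀ s ∈ T ∪ CGame.W2 G T, CGame.Absorbing G s)
    (k : ℕ) (r : ℝ) (hr0 : 0 < r) (hr1 : r ≤ 1)
    (η : S → M → ℝ) (hη : CGame.IsSel1 G η)
    (hηopt : ∀ s', 0 < CGame.entryTime G T k s' →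
      CGame.pre1Sel G (CGame.valIter G T (CGame.entryTime G T k s' - 1)) s' (η s')
        = CGame.pre1 G (CGame.valIter G T (CGame.entryTime G T k s' - 1)) s')
    (hηunif : ∀ s', CGame.entryTime G T k s' = 0 → η s' = CGame.uniformSel G s')
    (s : S) (hs : s ∉ T ∪ CGame.W2 G T) (hus : CGame.valIter G T k s = r) :
    ∀ b ∈ G.Γ₂ s,
      (∃ t ∈ CGame.destSet G η s b, r < CGame.valIter G T k t) ∨
      ((∀ t ∈ CGame.destSet G η s b, CGame.valIter G T k t = r) ∧
        ∃ t ∈ CGame.destSet G η s b,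
          CGame.entryTime G T k t < CGame.entryTime G T k s) := by
  intro b hb
  have hsT : s ∉ T := fun h => hs (Or.inl h)
  have hηd := hη s
  set ℓ := CGame.entryTime G T k s with hℓdef
  have hne : {j : ℕ | CGame.valIter G T j s = CGame.valIter G T k s}.Nonempty := ⟨k, rfl⟩
  have hℓk : ℓ ≤ k := Nat.sInf_le (show k ∈ _ from rfl)
  have hℓval : CGame.valIter G T ℓ s = CGame.valIter G T k s := Nat.sInf_mem hne
  have hℓpos : 0 < ℓ := by
    rcases Nat.eq_zero_or_pos ℓ with h | h
    · exfalso
      rw [h, hus] at hℓval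
      simp [CGame.valIter, hsT] at hℓval
      linarith
    · exact h
  have hopt := hηopt s (hℓdef ▸ hℓpos)
  rw [← hℓdef] at hopt
  set v := CGame.valIter G T (ℓ - 1) with hvdef
  have hv0 : ∀ t, 0 ≤ v t := CGame.valIter_nonneg hG T (ℓ - 1)
  have hv1 : ∀ t, v t ≤ 1 := CGame.valIter_le_one hG T (ℓ - 1)
  have hval : CGame.pre1 G v s = r := by
    have h1 : CGame.valIter G T ((ℓ - 1) + 1) s = CGame.pre1 G v s := rfl
    rw [Nat.sub_add_cancel hℓpos] at h1
    rw [← h1, hℓval, hus]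
  set p : S → ℝ := fun t => ∑ a : M, η s a * G.δ s a b t with hpdef
  have hp0 : ∀ t, 0 ≤ p t := fun t =>
    Finset.sum_nonneg fun a _ => mul_nonneg (hηd.1 a) (hG.2.2.1 s a b t)
  have hps : ∑ t : S, p t = 1 := by
    have h1 : ∑ t : S, p t = ∑ a : M, η s a * ∑ t : S, G.δ s a b t := by
      rw [hpdef, Finset.sum_comm]
      exact Finset.sum_congr rfl fun a _ => (Finset.mul_sum _ _ _).symm
    rw [h1]
    simp only [hG.2.2.2, mul_one]
    exact hηd.2.2
  have hpdest : ∀ t, p t ≠ 0 ↔ t ∈ CGame.destSet G η s b := by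
    intro t
    constructor
    · intro h
      obtain ⟨a, -, ha⟩ := Finset.exists_ne_zero_of_sum_ne_zero h
      exact ⟨a, mul_ne_zero_iff.mp ha⟩
    · rintro ⟨a, ha1, ha2⟩
      have hpos : 0 < η s a * G.δ s a b t :=
        mul_pos (lt_of_le_of_ne (hηd.1 a) (Ne.symm ha1))
          (lt_of_le_of_ne (hG.2.2.1 s a b t) (Ne.symm ha2))
      have hle := Finset.single_le_sum (f := fun a => η s a * G.δ s a b t)
        (fun a _ => mul_nonneg (hηd.1 a) (hG.2.2.1 s a b t)) (Finset.mem_univ a)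
      exact ne_of_gt (lt_of_lt_of_le hpos hle)
  have hkey : r ≤ ∑ t : S, v t * p t := by
    have h1 : CGame.pre1Sel G v s (η s) ≤ CGame.preSS G v s (η s) (CGame.pureDist b) :=
      CGame.pre1Sel_le_preSS hG hv0 s hηd.1 (CGame.pureDist_isDistOn hb)
    have h2 : CGame.preSS G v s (η s) (CGame.pureDist b) = ∑ t : S, v t * p t := by
      unfold CGame.preSS
      have hcol : ∀ a : M,
          (∑ b' : M, ∑ t : S, v t * G.δ s a b' t * η s a * CGame.pureDist b b')
            = ∑ t : S, v t * G.δ s a b t * η s a := by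
        intro a
        rw [Finset.sum_comm]
        refine Finset.sum_congr rfl fun t _ => ?_
        simp [CGame.pureDist, mul_ite, mul_one, mul_zero]
      calc (∑ a : M, ∑ b' : M, ∑ t : S, v t * G.δ s a b' t * η s a * CGame.pureDist b b')
          = ∑ a : M, ∑ t : S, v t * G.δ s a b t * η s a :=
            Finset.sum_congr rfl fun a _ => hcol a
        _ = ∑ t : S, ∑ a : M, v t * G.δ s a b t * η s a := Finset.sum_comm
        _ = ∑ t : S, v t * p t := by
            refine Finset.sum_congr rfl fun t _ => ?_
            rw [hpdef, Finset.mul_sum]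
            exact Finset.sum_congr rfl fun a _ => by ring
    rw [hopt, hval] at h1
    rw [h2] at h1
    exact h1
  by_cases hcase : ∃ t ∈ CGame.destSet G η s b, r < CGame.valIter G T k t
  · exact Or.inl hcase
  · right
    push_neg at hcase
    have hvle : ∀ t, p t ≠ 0 → v t ≤ r := fun t ht =>
      le_trans (CGame.valIter_mono hG T habs (le_trans (Nat.sub_le ℓ 1) hℓk) t)
        (hcase t ((hpdest t).mp ht))
    have hveq : ∀ t, p t ≠ 0 → v t = r := by
      by_contra h
      push_neg at h
      obtain ⟨t0, ht0, hne0⟩ := h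
      have hlt : v t0 < r := lt_of_le_of_ne (hvle t0 ht0) hne0
      have hsum : ∑ t : S, v t * p t < ∑ t : S, r * p t := by
        refine Finset.sum_lt_sum (fun t _ => ?_) ⟨t0, Finset.mem_univ t0, ?_⟩
        · by_cases hpt : p t = 0
          · simp [hpt]
          · exact mul_le_mul_of_nonneg_right (hvle t hpt) (hp0 t)
        · exact mul_lt_mul_of_pos_right hlt (lt_of_le_of_ne (hp0 t0) (Ne.symm ht0))
      rw [← Finset.mul_sum, hps, mul_one] at hsum
      linarith
    have hdesteq : ∀ t ∈ CGame.destSet G η s b, CGame.valIter G T k t = r := by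
      intro t ht
      have hpt : p t ≠ 0 := (hpdest t).mpr ht
      refine le_antisymm (hcase t ht) ?_
      calc r = v t := (hveq t hpt).symm
        _ ≤ CGame.valIter G T k t :=
            CGame.valIter_mono hG T habs (le_trans (Nat.sub_le ℓ 1) hℓk) t
    refine ⟨hdesteq, ?_⟩
    have hex : ∃ t, p t ≠ 0 := by
      by_contra h
      push_neg at h
      rw [Finset.sum_eq_zero (fun t _ => h t)] at hps
      norm_num at hps
    obtain ⟨t0, ht0⟩ := hex
    have htdest : t0 ∈ CGame.destSet G η s b := (hpdest t0).mp ht0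
    refine ⟨t0, htdest, ?_⟩
    have hmem' : (ℓ - 1) ∈ {j : ℕ | CGame.valIter G T j t0 = CGame.valIter G T k t0} := by
      show CGame.valIter G T (ℓ - 1) t0 = CGame.valIter G T k t0
      rw [← hvdef, hveq t0 ht0, hdesteq t0 htdest]
    calc CGame.entryTime G T k t0 ≤ ℓ - 1 := Nat.sInf_le hmem'
      _ < ℓ := Nat.sub_lt hℓpos one_pos
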